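/- Let c = c^cr = 1/(4 log 2) and fix K > 0. There exists N₀ such that for every integer N ≥ N₀, every subset A ⊆ V_N with |A| ≤ K·N^{4/3}, and all vertices u, v ∈ V_N ∖ A, the two-step transition probability of the chain restricted to V_N ∖ A satisfies P_A²(u,v) = Σ_{x ∈ V_N∖A} P_A(u,x)·P_A(x,v) ≥ (c/2)·(1/N²). -/

import Mathlib

open scoped BigOperators

/-- Vertices of the discrete 2-dimensional torus. -/
abbrev Vtx (N : ℕ) : Type := ZMod N × ZMod N

/-- `ρ_N(i)`: for a residue represented in `{0,…,N−1}`, `ρ_N(i) = i` if `i ≤ N/2`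
and `ρ_N(i) = N − i` otherwise. -/
def rhoN (N : ℕ) (i : ZMod N) : ℕ :=
  if 2 * i.val ≤ N then i.val else N - i.val

/-- Torus distance `ρ(u,v) = ρ_N(u₁ − v₁) + ρ_N(u₂ − v₂)`. -/
def torusDist (N : ℕ) (u v : Vtx N) : ℕ :=
  rhoN N (u.1 - v.1) + rhoN N (u.2 - v.2)

/-- Connection probability `p(u,v) = min(c/(N·ρ(u,v)), 1)` for `u ≠ v`, `p(u,u) = 0`. -/
noncomputable def edgeProb (N : ℕ) (c : ℝ) (u v : Vtx N) : ℝ :=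
  if u = v then 0 else min (c / ((N : ℝ) * (torusDist N u v : ℝ))) 1

/-- The critical value `c^cr = 1/(4 log 2)`. -/
noncomputable def ccr : ℝ := 1 / (4 * Real.log 2)

/-- `Z_{N,A}(u) = Σ_{v ∈ V_N∖A, v ≠ u} p(u,v)`. -/
noncomputable def ZNA (N : ℕ) [NeZero N] (c : ℝ) (A : Finset (Vtx N)) (u : Vtx N) : ℝ :=
  ∑ v ∈ (Finset.univ \ A).erase u, edgeProb N c u v

/-- Transition matrix of the chain avoiding `A`:
`P_A(u,v) = p(u,v)/Z_{N,A}(u)` for `v ∉ A`, and `0` for `v ∈ A`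
(for distinct `u, v ∈ V_N∖A` this is `p(u,v)/Z_{N,A}(u)`, and `P_A(u,u) = 0`
since `p(u,u) = 0`). -/
noncomputable def transPA (N : ℕ) [NeZero N] (c : ℝ) (A : Finset (Vtx N))
    (u v : Vtx N) : ℝ :=
  if v ∈ A then 0 else edgeProb N c u v / ZNA N c A u


open Finset

section Aux

variable (N : ℕ) [NeZero N]

lemma two_rhoN_le (i : ZMod N) : 2 * rhoN N i ≤ N := by
  have hv : i.val < N := ZMod.val_lt i
  unfold rhoN; split_ifs with h <;> omega

lemma rhoN_eq_zero {i : ZMod N} (h : rhoN N i = 0) : i = 0 := by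
  have hv : i.val < N := ZMod.val_lt i
  have hN : N ≠ 0 := NeZero.ne N
  have : i.val = 0 := by unfold rhoN at h; split_ifs at h <;> omega
  exact (ZMod.val_eq_zero i).1 this

lemma torusDist_le (u v : Vtx N) : torusDist N u v ≤ N := by
  have h1 := two_rhoN_le N (u.1 - v.1)
  have h2 := two_rhoN_le N (u.2 - v.2)
  unfold torusDist; omega

lemma one_le_torusDist {u v : Vtx N} (h : u ≠ v) : 1 ≤ torusDist N u v := by
  rcases Nat.eq_zero_or_pos (torusDist N u v) with h0 | h0
  · exfalso
    unfold torusDist at h0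
    have h1 : rhoN N (u.1 - v.1) = 0 := by omega
    have h2 : rhoN N (u.2 - v.2) = 0 := by omega
    have e1 : u.1 = v.1 := sub_eq_zero.1 (rhoN_eq_zero N h1)
    have e2 : u.2 = v.2 := sub_eq_zero.1 (rhoN_eq_zero N h2)
    exact h (Prod.ext e1 e2)
  · exact h0

lemma fiber1_card_le_two (x : ZMod N) (j : ℕ) :
    (univ.filter fun a : ZMod N => rhoN N (x - a) = j).card ≤ 2 := by
  have hsub : (univ.filter fun a : ZMod N => rhoN N (x - a) = j) ⊆
      {x - (j : ZMod N), x - ((N - j : ℕ) : ZMod N)} := by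
    intro a ha
    have hj : rhoN N (x - a) = j := (mem_filter.1 ha).2
    have hv : (x - a).val < N := ZMod.val_lt _
    have hval : (x - a).val = j ∨ (x - a).val = N - j := by
      unfold rhoN at hj; split_ifs at hj <;> [left; right] <;> omega
    have hxa : (((x - a).val : ℕ) : ZMod N) = x - a := ZMod.natCast_rightInverse _
    rcases hval with hval | hval
    · refine mem_insert.2 (Or.inl ?_)
      have hxa' : x - a = (j : ZMod N) := by rw [← hxa, hval]
      rw [← hxa']; ring
    · refine mem_insert.2 (Or.inr (mem_singleton.2 ?_))
      have hxa' : x - a = ((N - j : ℕ) : ZMod N) := by rw [← hxa, hval]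
      rw [← hxa']; ring
  refine le_trans (card_le_card hsub) (le_trans (card_insert_le _ _) (by simp))

lemma fiber1_card_zero (x : ZMod N) :
    (univ.filter fun a : ZMod N => rhoN N (x - a) = 0).card ≤ 1 := by
  have hsub : (univ.filter fun a : ZMod N => rhoN N (x - a) = 0) ⊆ {x} := by
    intro a ha
    have hj : rhoN N (x - a) = 0 := (mem_filter.1 ha).2
    have h0 : x - a = 0 := rhoN_eq_zero N hj
    exact mem_singleton.2 (sub_eq_zero.1 h0).symm
  exact le_trans (card_le_card hsub) (by simp)

lemma fiber_dist_card (x : Vtx N) {d : ℕ} (hd : 1 ≤ d) :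
    (univ.filter fun v : Vtx N => torusDist N x v = d).card ≤ 4 * d := by
  classical
  set n1 : ℕ → ℕ := fun j => (univ.filter fun a : ZMod N => rhoN N (x.1 - a) = j).card with hn1
  set n2 : ℕ → ℕ := fun j => (univ.filter fun a : ZMod N => rhoN N (x.2 - a) = j).card with hn2
  have hsub : (univ.filter fun v : Vtx N => torusDist N x v = d) ⊆
      (Finset.range (d + 1)).biUnion (fun j =>
        (univ.filter fun a : ZMod N => rhoN N (x.1 - a) = j) ×ˢ
        (univ.filter fun b : ZMod N => rhoN N (x.2 - b) = d - j)) := by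
    intro v hv
    have hv' : torusDist N x v = d := (mem_filter.1 hv).2
    unfold torusDist at hv'
    refine mem_biUnion.2 ⟨rhoN N (x.1 - v.1), ?_, ?_⟩
    · exact Finset.mem_range.2 (by omega)
    · refine Finset.mem_product.2 ⟨?_, ?_⟩
      · exact mem_filter.2 ⟨mem_univ _, rfl⟩
      · exact mem_filter.2 ⟨mem_univ _, by omega⟩
  refine le_trans (card_le_card hsub) (le_trans (card_biUnion_le) ?_)
  have hterm : ∀ j, ((univ.filter fun a : ZMod N => rhoN N (x.1 - a) = j) ×ˢ
      (univ.filter fun b : ZMod N => rhoN N (x.2 - b) = d - j)).card = n1 j * n2 (d - j) := by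
    intro j; rw [card_product]
  obtain ⟨e, rfl⟩ : ∃ e, d = e + 1 := ⟨d - 1, by omega⟩
  rw [Finset.sum_congr rfl (fun j _ => hterm j)]
  rw [Finset.sum_range_succ, Finset.sum_range_succ']
  have h0 : n1 0 * n2 (e + 1 - 0) ≤ 2 :=
    le_trans (Nat.mul_le_mul (fiber1_card_zero N x.1) (fiber1_card_le_two N x.2 _)) (by norm_num)
  have hl : n1 (e + 1) * n2 (e + 1 - (e + 1)) ≤ 2 := by
    have he : e + 1 - (e + 1) = 0 := by omega
    rw [he]
    exact le_trans (Nat.mul_le_mul (fiber1_card_le_two N x.1 _) (fiber1_card_zero N x.2)) (by norm_num)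
  have hmid : ∑ j ∈ Finset.range e, n1 (j + 1) * n2 (e + 1 - (j + 1)) ≤ 4 * e := by
    refine le_trans (Finset.sum_le_sum (fun j _ =>
      Nat.mul_le_mul (fiber1_card_le_two N x.1 _) (fiber1_card_le_two N x.2 _))) ?_
    simp [Finset.sum_const, Finset.card_range]; omega
  omega

lemma sum_inv_dist (x : Vtx N) :
    ∑ v ∈ univ.erase x, (1 / (torusDist N x v : ℝ)) ≤ 4 * N := by
  classical
  have hmaps : ∀ v ∈ univ.erase x, torusDist N x v ∈ Finset.Icc 1 N := by
    intro v hv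
    have hvx : v ≠ x := (mem_erase.1 hv).1
    exact Finset.mem_Icc.2 ⟨one_le_torusDist N (Ne.symm hvx), torusDist_le N x v⟩
  rw [← Finset.sum_fiberwise_of_maps_to hmaps (fun v => 1 / (torusDist N x v : ℝ))]
  have hinner : ∀ d ∈ Finset.Icc 1 N,
      (∑ v ∈ (univ.erase x).filter (fun v => torusDist N x v = d),
        (1 / (torusDist N x v : ℝ))) ≤ 4 := by
    intro d hd
    obtain ⟨hd1, hdN⟩ := Finset.mem_Icc.1 hd
    have hdpos : (0:ℝ) < d := by exact_mod_cast hd1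
    have hcard : ((univ.erase x).filter (fun v => torusDist N x v = d)).card ≤ 4 * d := by
      refine le_trans (card_le_card ?_) (fiber_dist_card N x hd1)
      exact filter_subset_filter _ (erase_subset _ _)
    calc (∑ v ∈ (univ.erase x).filter (fun v => torusDist N x v = d),
            (1 / (torusDist N x v : ℝ)))
        = ∑ v ∈ (univ.erase x).filter (fun v => torusDist N x v = d), (1 / (d : ℝ)) := by
          refine Finset.sum_congr rfl (fun v hv => ?_)
          rw [(mem_filter.1 hv).2]
      _ = (((univ.erase x).filter (fun v => torusDist N x v = d)).card : ℝ) * (1 / d) := by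
          rw [Finset.sum_const, nsmul_eq_mul]
      _ ≤ (4 * d : ℝ) * (1 / d) := by
          refine mul_le_mul_of_nonneg_right ?_ (by positivity)
          exact_mod_cast hcard
      _ = 4 := by field_simp
  refine le_trans (Finset.sum_le_sum hinner) ?_
  rw [Finset.sum_const, nsmul_eq_mul, Nat.card_Icc]
  simp [mul_comm]

end Aux

section EdgeProb

variable {N : ℕ} [NeZero N] {c : ℝ}

lemma Npos (N : ℕ) [NeZero N] : (0:ℝ) < N := by
  exact_mod_cast Nat.pos_of_ne_zero (NeZero.ne N)

lemma edgeProb_nonneg (hc : 0 ≤ c) (u v : Vtx N) : 0 ≤ edgeProb N c u v := by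
  unfold edgeProb; split_ifs with h
  · exact le_rfl
  · exact le_min (by positivity) (by norm_num)

lemma edgeProb_le_div (hc : 0 ≤ c) {u v : Vtx N} (h : u ≠ v) :
    edgeProb N c u v ≤ c / ((N : ℝ) * (torusDist N u v : ℝ)) := by
  unfold edgeProb
  rw [if_neg h]
  exact min_le_left _ _

lemma edgeProb_le_cN (hc : 0 ≤ c) {u v : Vtx N} (h : u ≠ v) :
    edgeProb N c u v ≤ c / (N : ℝ) := by
  refine le_trans (edgeProb_le_div hc h) ?_
  have hN : (0:ℝ) < N := Npos N
  have hρ : (1:ℝ) ≤ (torusDist N u v : ℝ) := by exact_mod_cast one_le_torusDist N h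
  exact div_le_div_of_nonneg_left hc hN (by nlinarith)

lemma edgeProb_ge (hc : 0 ≤ c) (hc1 : c ≤ 1) {u v : Vtx N} (h : u ≠ v) :
    c / (N : ℝ) ^ 2 ≤ edgeProb N c u v := by
  unfold edgeProb
  rw [if_neg h]
  have hN : (0:ℝ) < N := Npos N
  have hρ1 : (1:ℝ) ≤ (torusDist N u v : ℝ) := by exact_mod_cast one_le_torusDist N h
  have hρN : ((torusDist N u v : ℕ) : ℝ) ≤ (N:ℝ) := by exact_mod_cast torusDist_le N u v
  refine le_min ?_ ?_
  · have hpos : (0:ℝ) < (N : ℝ) * (torusDist N u v : ℝ) := by positivity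
    exact div_le_div_of_nonneg_left hc hpos (by nlinarith)
  · rw [div_le_one (by positivity)]
    nlinarith

end EdgeProb


section ZBounds

variable {N : ℕ} [NeZero N] {c : ℝ}

lemma card_univ_vtx (N : ℕ) [NeZero N] : (univ : Finset (Vtx N)).card = N * N := by
  simp [Finset.card_univ, ZMod.card]

lemma ZNA_le (hc : 0 ≤ c) (A : Finset (Vtx N)) (x : Vtx N) : ZNA N c A x ≤ 4 * c := by
  have hN : (0:ℝ) < N := Npos N
  have hNne : (N:ℝ) ≠ 0 := hN.ne'
  unfold ZNA
  have step1 : ∑ v ∈ (univ \ A).erase x, edgeProb N c x v ≤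
      ∑ v ∈ (univ \ A).erase x, (c / (N:ℝ)) * (1 / (torusDist N x v : ℝ)) := by
    refine Finset.sum_le_sum (fun v hv => ?_)
    have hvx : x ≠ v := ((mem_erase.1 hv).1).symm
    refine le_trans (edgeProb_le_div hc hvx) (le_of_eq ?_)
    rw [div_mul_div_comm, mul_one]
  have step2 : ∑ v ∈ (univ \ A).erase x, (c / (N:ℝ)) * (1 / (torusDist N x v : ℝ)) ≤
      ∑ v ∈ univ.erase x, (c / (N:ℝ)) * (1 / (torusDist N x v : ℝ)) := by
    refine Finset.sum_le_sum_of_subset_of_nonneg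
      (Finset.erase_subset_erase _ Finset.sdiff_subset) (fun v _ _ => ?_)
    exact mul_nonneg (div_nonneg hc hN.le) (by positivity)
  refine le_trans step1 (le_trans step2 ?_)
  rw [← Finset.mul_sum]
  have := sum_inv_dist N x
  calc (c / (N:ℝ)) * ∑ v ∈ univ.erase x, (1 / (torusDist N x v : ℝ))
      ≤ (c / (N:ℝ)) * (4 * N) :=
        mul_le_mul_of_nonneg_left this (div_nonneg hc hN.le)
    _ = 4 * c := by field_simp

lemma ZNA_ge (hc : 0 ≤ c) (hc1 : c ≤ 1) {A : Finset (Vtx N)}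
    (hA : (A.card : ℝ) ≤ (N:ℝ)^2 / 4) (hN2 : 2 ≤ N) (x : Vtx N) :
    c / 2 ≤ ZNA N c A x := by
  have hN : (0:ℝ) < N := Npos N
  have hNne : (N:ℝ) ≠ 0 := hN.ne'
  have hN2R : (2:ℝ) ≤ (N:ℝ) := by exact_mod_cast hN2
  have h2 : A.card ≤ N * N := by
    have h := Finset.card_le_card (Finset.subset_univ A)
    rwa [card_univ_vtx N] at h
  have h1 : (univ \ A : Finset (Vtx N)).card = N * N - A.card := by
    rw [Finset.card_sdiff_of_subset (Finset.subset_univ A), card_univ_vtx N]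
  have h3 : N * N - A.card ≤ ((univ \ A : Finset (Vtx N)).erase x).card + 1 := by
    have := Finset.pred_card_le_card_erase (s := (univ \ A : Finset (Vtx N))) (a := x)
    omega
  have hcast : ((N * N - A.card : ℕ) : ℝ) ≤ (((univ \ A : Finset (Vtx N)).erase x).card : ℝ) + 1 := by
    exact_mod_cast h3
  rw [Nat.cast_sub h2] at hcast
  push_cast at hcast
  have hcardR : (N:ℝ)^2 / 2 ≤ (((univ \ A : Finset (Vtx N)).erase x).card : ℝ) := by nlinarith
  unfold ZNA
  have step : ∑ v ∈ (univ \ A).erase x, (c / (N:ℝ)^2) ≤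
      ∑ v ∈ (univ \ A).erase x, edgeProb N c x v := by
    refine Finset.sum_le_sum (fun v hv => ?_)
    exact edgeProb_ge hc hc1 ((mem_erase.1 hv).1).symm
  refine le_trans ?_ step
  rw [Finset.sum_const, nsmul_eq_mul]
  have hdiv : (0:ℝ) ≤ c / (N:ℝ)^2 := by positivity
  calc c / 2 = ((N:ℝ)^2 / 2) * (c / (N:ℝ)^2) := by field_simp
    _ ≤ (((univ \ A : Finset (Vtx N)).erase x).card : ℝ) * (c / (N:ℝ)^2) :=
        mul_le_mul_of_nonneg_right hcardR hdiv

end ZBounds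

/-- At criticality, for every `K > 0` there is `N₀` such that for every `N ≥ N₀`,
every `A ⊆ V_N` with `|A| ≤ K·N^{4/3}` and all `u, v ∈ V_N ∖ A`,
`P_A²(u,v) = Σ_{x ∈ V_N∖A} P_A(u,x)·P_A(x,v) ≥ (c/2)·(1/N²)`. -/
theorem stmt15 (K : ℝ) (hK : 0 < K) :
    ∃ N₀ : ℕ, ∀ (N : ℕ) [NeZero N], N₀ ≤ N →
      ∀ A : Finset (Vtx N), (A.card : ℝ) ≤ K * (N : ℝ) ^ ((4 : ℝ) / 3) →
        ∀ u v : Vtx N, u ∉ A → v ∉ A →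
          ccr / 2 * (1 / (N : ℝ) ^ 2) ≤
            ∑ x ∈ Finset.univ \ A, transPA N ccr A u x * transPA N ccr A x v := by
  have hlog : (0.6931471803:ℝ) < Real.log 2 := Real.log_two_gt_d9
  have hc0 : 0 < ccr := by
    unfold ccr; apply div_pos one_pos; linarith
  have hc1 : ccr ≤ 1 := by
    unfold ccr; rw [div_le_one (by linarith)]; linarith
  have h2c : 2 * ccr ≤ 3 / 4 := by
    unfold ccr
    rw [mul_one_div, div_le_iff₀ (by linarith : (0:ℝ) < 4 * Real.log 2)]
    nlinarith
  refine ⟨max 8 (⌈(4 * K) ^ ((3:ℝ)/2)⌉₊ + 1), ?_⟩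
  intro N _ hN A hA u v hu hv
  have hN8 : 8 ≤ N := le_trans (le_max_left _ _) hN
  have hNR : (8:ℝ) ≤ (N:ℝ) := by exact_mod_cast hN8
  have hN0 : (0:ℝ) < N := by linarith
  have hNne : (N:ℝ) ≠ 0 := hN0.ne'
  have hA4 : (A.card : ℝ) ≤ (N:ℝ)^2 / 4 := by
    have hmax : (⌈(4 * K) ^ ((3:ℝ)/2)⌉₊ + 1 : ℕ) ≤ N := le_trans (le_max_right _ _) hN
    have h1 : (4 * K) ^ ((3:ℝ)/2) ≤ (N:ℝ) := by
      refine le_trans (Nat.le_ceil _) ?_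
      exact_mod_cast le_trans (Nat.le_succ _) hmax
    have h4K : (0:ℝ) ≤ 4 * K := by linarith
    have h2 : 4 * K ≤ (N:ℝ) ^ ((2:ℝ)/3) := by
      have h3 := Real.rpow_le_rpow (Real.rpow_nonneg h4K _) h1 (by norm_num : (0:ℝ) ≤ 2/3)
      rwa [← Real.rpow_mul h4K, show (3:ℝ)/2 * (2/3) = 1 by norm_num, Real.rpow_one] at h3
    have hsum : (N:ℝ) ^ ((2:ℝ)/3) * (N:ℝ) ^ ((4:ℝ)/3) = (N:ℝ)^2 := by
      rw [← Real.rpow_add hN0, show (2:ℝ)/3 + 4/3 = ((2:ℕ):ℝ) by norm_num, Real.rpow_natCast]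
    calc (A.card : ℝ) ≤ K * (N:ℝ) ^ ((4:ℝ)/3) := hA
      _ ≤ ((N:ℝ) ^ ((2:ℝ)/3) / 4) * (N:ℝ) ^ ((4:ℝ)/3) :=
          mul_le_mul_of_nonneg_right (by linarith) (by positivity)
      _ = (N:ℝ)^2 / 4 := by rw [div_mul_eq_mul_div, hsum]
  have hZle : ∀ x : Vtx N, ZNA N ccr A x ≤ 4 * ccr := fun x => ZNA_le hc0.le A x
  have hZge : ∀ x : Vtx N, ccr / 2 ≤ ZNA N ccr A x :=
    fun x => ZNA_ge hc0.le hc1 hA4 (by omega) x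
  have hZpos : ∀ x : Vtx N, 0 < ZNA N ccr A x :=
    fun x => lt_of_lt_of_le (by positivity) (hZge x)
  have htrans_nonneg : ∀ a b : Vtx N, 0 ≤ transPA N ccr A a b := by
    intro a b; unfold transPA; split_ifs
    · exact le_rfl
    · exact div_nonneg (edgeProb_nonneg hc0.le _ _) (hZpos a).le
  have hsub' : ((univ \ A : Finset (Vtx N)).erase u).erase v ⊆ (univ \ A) :=
    subset_trans (erase_subset _ _) (erase_subset _ _)
  refine le_trans ?_ (Finset.sum_le_sum_of_subset_of_nonneg hsub'
    (fun x _ _ => mul_nonneg (htrans_nonneg u x) (htrans_nonneg x v)))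
  have hk : ∀ x ∈ ((univ \ A : Finset (Vtx N)).erase u).erase v,
      edgeProb N ccr u x * (1 / (4 * (N:ℝ)^2) / ZNA N ccr A u) ≤
        transPA N ccr A u x * transPA N ccr A x v := by
    intro x hx
    have hxv : x ≠ v := (mem_erase.1 hx).1
    have hxA : x ∉ A := (Finset.mem_sdiff.1 (hsub' hx)).2
    simp only [transPA, if_neg hxA, if_neg hv]
    have h1 : (ccr / (N:ℝ)^2) / (4 * ccr) ≤ edgeProb N ccr x v / ZNA N ccr A x :=
      div_le_div₀ (edgeProb_nonneg hc0.le x v) (edgeProb_ge hc0.le hc1 hxv) (hZpos x) (hZle x)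
    have h2 : (ccr / (N:ℝ)^2) / (4 * ccr) = 1 / (4 * (N:ℝ)^2) := by
      have hccr : ccr ≠ 0 := hc0.ne'
      field_simp
    calc edgeProb N ccr u x * (1 / (4 * (N:ℝ)^2) / ZNA N ccr A u)
        = (edgeProb N ccr u x / ZNA N ccr A u) * ((ccr / (N:ℝ)^2) / (4 * ccr)) := by
          rw [h2]; ring
      _ ≤ (edgeProb N ccr u x / ZNA N ccr A u) * (edgeProb N ccr x v / ZNA N ccr A x) :=
          mul_le_mul_of_nonneg_left h1
            (div_nonneg (edgeProb_nonneg hc0.le _ _) (hZpos u).le)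
  refine le_trans ?_ (Finset.sum_le_sum hk)
  rw [← Finset.sum_mul]
  have hZu : ZNA N ccr A u = ∑ x ∈ (univ \ A : Finset (Vtx N)).erase u, edgeProb N ccr u x := rfl
  have hsum_ge : ZNA N ccr A u - ccr / (N:ℝ) ≤
      ∑ x ∈ ((univ \ A : Finset (Vtx N)).erase u).erase v, edgeProb N ccr u x := by
    by_cases hvm : v ∈ (univ \ A : Finset (Vtx N)).erase u
    · have hadd := Finset.add_sum_erase _ (edgeProb N ccr u) hvm
      have hpv : edgeProb N ccr u v ≤ ccr / (N:ℝ) :=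
        edgeProb_le_cN hc0.le ((mem_erase.1 hvm).1).symm
      rw [hZu]; linarith
    · rw [Finset.erase_eq_of_notMem hvm, hZu]
      have : (0:ℝ) ≤ ccr / (N:ℝ) := by positivity
      linarith
  have hk0 : (0:ℝ) ≤ 1 / (4 * (N:ℝ)^2) / ZNA N ccr A u :=
    div_nonneg (by positivity) (hZpos u).le
  refine le_trans ?_ (mul_le_mul_of_nonneg_right hsum_ge hk0)
  have hZupos : 0 < ZNA N ccr A u := hZpos u
  have hZu2 : ccr / 2 ≤ ZNA N ccr A u := hZge u
  have hZune : ZNA N ccr A u ≠ 0 := hZupos.ne'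
  have key : (ZNA N ccr A u - ccr / (N:ℝ)) * (1 / (4 * (N:ℝ)^2) / ZNA N ccr A u)
      = (1 - (ccr / (N:ℝ)) / ZNA N ccr A u) * ((1/4) * (1 / (N:ℝ)^2)) := by
    field_simp
  rw [key]
  have hfrac : (ccr / (N:ℝ)) / ZNA N ccr A u ≤ 2 / (N:ℝ) := by
    rw [div_le_div_iff₀ hZupos hN0, div_mul_cancel₀ _ hNne]
    linarith
  have h2N : (2:ℝ) / (N:ℝ) ≤ 1/4 := by
    rw [div_le_div_iff₀ hN0 (by norm_num : (0:ℝ) < 4)]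
    linarith
  have hgoal : ccr / 2 ≤ (1 - (ccr / (N:ℝ)) / ZNA N ccr A u) * (1/4) := by
    nlinarith
  calc ccr / 2 * (1 / (N:ℝ)^2)
      ≤ ((1 - (ccr / (N:ℝ)) / ZNA N ccr A u) * (1/4)) * (1 / (N:ℝ)^2) :=
        mul_le_mul_of_nonneg_right hgoal (by positivity)
    _ = (1 - (ccr / (N:ℝ)) / ZNA N ccr A u) * ((1/4) * (1 / (N:ℝ)^2)) := by ring
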